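/- For two unit vectors v1, v2 in R^2 with angle θ ∈ [0, π] between them, and a random line through the origin whose normal direction is uniform on the circle, the probability that both vectors lie strictly on the same side of the line is 1 - θ/π. -/

import Mathlib

open MeasureTheory Real
open scoped InnerProductSpace

lemma periodic_vol {S : Set ℝ} (hS : MeasurableSet S) {T : ℝ} (hT : 0 < T)
    (hper : ∀ x, x + T ∈ S ↔ x ∈ S) (a b : ℝ) :
    volume (S ∩ Set.Ioc a (a + T)) = volume (S ∩ Set.Ioc b (b + T)) := by
  haveI : VAddInvariantMeasure (AddSubgroup.zmultiples T) ℝ volume :=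
    ⟨fun c s _ => measure_preimage_add _ _ _⟩
  have hper' : Function.Periodic (fun x => x ∈ S) T := fun x => propext (hper x)
  refine (isAddFundamentalDomain_Ioc hT a).measure_set_eq
    (isAddFundamentalDomain_Ioc hT b) hS fun g => ?_
  obtain ⟨g, n, rfl⟩ := g
  ext x
  have := (hper'.zsmul n) x
  simp only [Set.mem_preimage] at *
  simpa [add_comm] using this.to_iff

lemma vol_inter_Ico_eq_Ioc (S : Set ℝ) (a b : ℝ) :
    volume (S ∩ Set.Ico a b) = volume (S ∩ Set.Ioc a b) :=
  measure_congr ((Filter.EventuallyEq.refl _ S).inter Ico_ae_eq_Ioc)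

lemma cos_set_base {θ : ℝ} (h0 : 0 ≤ θ) (h1 : θ ≤ π) :
    {u : ℝ | -Real.cos θ < Real.cos u} ∩ Set.Ioc (-π) π = Set.Ioo (-(π - θ)) (π - θ) := by
  have hπθ : -Real.cos θ = Real.cos (π - θ) := (Real.cos_pi_sub θ).symm
  ext u
  simp only [Set.mem_inter_iff, Set.mem_setOf_eq, Set.mem_Ioc, Set.mem_Ioo, hπθ]
  constructor
  · rintro ⟨hcos, hu1, hu2⟩
    have habs : |u| ≤ π := abs_le.2 ⟨hu1.le, hu2⟩
    by_contra hc
    have h2 : π - θ ≤ |u| := by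
      rcases not_and_or.1 hc with h | h
      · calc π - θ ≤ -u := by linarith [not_lt.1 h]
          _ ≤ |u| := neg_le_abs u
      · calc π - θ ≤ u := not_lt.1 h
          _ ≤ |u| := le_abs_self u
    have : Real.cos u ≤ Real.cos (π - θ) := by
      rw [← Real.cos_abs]
      exact Real.cos_le_cos_of_nonneg_of_le_pi (by linarith) habs h2
    linarith
  · rintro ⟨hu1, hu2⟩
    have habs : |u| < π - θ := abs_lt.2 ⟨by linarith, hu2⟩
    refine ⟨?_, by linarith [abs_lt.1 habs |>.1], by linarith [abs_lt.1 habs |>.2]⟩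
    have h3 : Real.cos (π - θ) < Real.cos |u| :=
      Real.cos_lt_cos_of_nonneg_of_le_pi (abs_nonneg u) (by linarith) habs
    rwa [Real.cos_abs] at h3

lemma exists_angle (v : EuclideanSpace ℝ (Fin 2)) (hv : ‖v‖ = 1) :
    ∃ a : ℝ, Real.cos a = v 0 ∧ Real.sin a = v 1 := by
  have hnorm : Real.sqrt (v 0 ^ 2 + v 1 ^ 2) = 1 := by
    rw [← hv, EuclideanSpace.norm_eq]
    norm_num [Fin.sum_univ_two]
  have hsq : v 0 ^ 2 + v 1 ^ 2 = 1 := by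
    have := congrArg (· ^ 2) hnorm
    simpa [Real.sq_sqrt (by positivity : (0:ℝ) ≤ v 0 ^ 2 + v 1 ^ 2)] using this
  set z : ℂ := ⟨v 0, v 1⟩ with hz
  have habs : ‖z‖ = 1 := by
    rw [Complex.norm_def, Complex.normSq_apply]
    simp only [hz]
    rw [show v 0 * v 0 + v 1 * v 1 = v 0 ^ 2 + v 1 ^ 2 by ring, hsq, Real.sqrt_one]
  have hz0 : z ≠ 0 := by
    intro h0; rw [h0] at habs; simp at habs
  exact ⟨Complex.arg z, by rw [Complex.cos_arg hz0, habs]; simp [hz],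
    by rw [Complex.sin_arg, habs]; simp [hz]⟩

lemma inner_formula (v : EuclideanSpace ℝ (Fin 2)) (w : EuclideanSpace ℝ (Fin 2)) :
    ⟪v, w⟫_ℝ = v 0 * w 0 + v 1 * w 1 := by
  simp [PiLp.inner_apply, Fin.sum_univ_two, RCLike.inner_apply, mul_comm]

/-- For two unit vectors `v₁ v₂` in `ℝ²` with angle `θ ∈ [0, π]` between them, and a random
line through the origin whose normal direction `h φ = (cos φ, sin φ)` is uniform on the
circle (`φ` uniform on `[0, 2π)`), the probability that both vectors lie strictly on the
same side of the line (i.e. `⟪v₁, h⟫` and `⟪v₂, h⟫` have the same sign, equivalently their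
product is positive) is `1 - θ/π`. -/
theorem same_side_probability_plane
    (v₁ v₂ : EuclideanSpace ℝ (Fin 2)) (hv₁ : ‖v₁‖ = 1) (hv₂ : ‖v₂‖ = 1)
    (θ : ℝ) (hθ : θ = Real.arccos ⟪v₁, v₂⟫_ℝ)
    (h : ℝ → EuclideanSpace ℝ (Fin 2))
    (hdef : ∀ φ : ℝ, h φ = (WithLp.equiv 2 (Fin 2 → ℝ)).symm ![Real.cos φ, Real.sin φ]) :
    (volume {φ ∈ Set.Ico (0 : ℝ) (2 * π) |
        0 < ⟪v₁, h φ⟫_ℝ * ⟪v₂, h φ⟫_ℝ}).toReal / (2 * π) = 1 - θ / π := by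
  obtain ⟨a, ha1, ha2⟩ := exists_angle v₁ hv₁
  obtain ⟨b, hb1, hb2⟩ := exists_angle v₂ hv₂
  have hθ0 : 0 ≤ θ := hθ ▸ Real.arccos_nonneg _
  have hθπ : θ ≤ π := hθ ▸ Real.arccos_le_pi _
  have hcosθ : Real.cos θ = Real.cos (b - a) := by
    have h12 : ⟪v₁, v₂⟫_ℝ = Real.cos (b - a) := by
      rw [inner_formula, ← ha1, ← ha2, ← hb1, ← hb2, Real.cos_sub]; ring
    rw [hθ, h12, Real.cos_arccos (Real.neg_one_le_cos _) (Real.cos_le_one _)]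
  set γ := a + b with hγ
  have hprod : ∀ φ : ℝ, ⟪v₁, h φ⟫_ℝ * ⟪v₂, h φ⟫_ℝ
      = (Real.cos θ + Real.cos (2 * φ - γ)) / 2 := by
    intro φ
    rw [hdef φ, inner_formula, inner_formula]
    simp only [WithLp.equiv_symm_apply, PiLp.toLp_apply, Matrix.cons_val_zero, Matrix.cons_val_one,
      Matrix.head_cons]
    rw [← ha1, ← ha2, ← hb1, ← hb2, hcosθ, Real.cos_sub,
      show 2 * φ - γ = (φ - a) + (φ - b) by rw [hγ]; ring,
      Real.cos_add, Real.cos_sub, Real.cos_sub, Real.sin_sub, Real.sin_sub]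
    linear_combination ((Real.cos a * Real.cos b + Real.sin a * Real.sin b) / 2) *
      Real.sin_sq_add_cos_sq φ
  set B : Set ℝ := {u | -Real.cos θ < Real.cos u} with hB
  have hBmeas : MeasurableSet B := measurableSet_lt measurable_const Real.continuous_cos.measurable
  have hBper : ∀ x : ℝ, x + 2 * π ∈ B ↔ x ∈ B := by
    intro x; simp [hB, Real.cos_add_two_pi]
  have h2π : (0 : ℝ) < 2 * π := by positivity
  have hset : {φ ∈ Set.Ico (0 : ℝ) (2 * π) | 0 < ⟪v₁, h φ⟫_ℝ * ⟪v₂, h φ⟫_ℝ}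
      = (fun φ : ℝ => 2 * φ - γ) ⁻¹' (B ∩ Set.Ico (-γ) (4 * π - γ)) := by
    ext φ
    simp only [Set.mem_setOf_eq, Set.mem_Ico, Set.mem_preimage, Set.mem_inter_iff, hprod φ, hB]
    constructor
    · rintro ⟨⟨h0, h2⟩, hpos⟩
      exact ⟨by linarith, by constructor <;> linarith⟩
    · rintro ⟨hpos, h0, h2⟩
      exact ⟨⟨by linarith, by linarith⟩, by linarith⟩
  have hpre : volume ((fun φ : ℝ => 2 * φ - γ) ⁻¹' (B ∩ Set.Ico (-γ) (4 * π - γ)))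
      = ENNReal.ofReal 2⁻¹ * volume (B ∩ Set.Ico (-γ) (4 * π - γ)) := by
    have heq : (fun φ : ℝ => 2 * φ - γ) ⁻¹' (B ∩ Set.Ico (-γ) (4 * π - γ))
        = (fun φ : ℝ => (2 : ℝ) * φ) ⁻¹' ((fun y : ℝ => -γ + y) ⁻¹' (B ∩ Set.Ico (-γ) (4 * π - γ))) := by
      ext φ; simp only [Set.mem_preimage, neg_add_eq_sub]
    rw [heq, Real.volume_preimage_mul_left two_ne_zero, measure_preimage_add]
    norm_num [abs_of_nonneg]
  have hIcoIoc : volume (B ∩ Set.Ico (-γ) (4 * π - γ)) = volume (B ∩ Set.Ioc (-γ) (4 * π - γ)) :=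
    vol_inter_Ico_eq_Ioc B _ _
  have hsplit : Set.Ioc (-γ) (4 * π - γ) = Set.Ioc (-γ) (2 * π - γ) ∪ Set.Ioc (2 * π - γ) (4 * π - γ) :=
    (Set.Ioc_union_Ioc_eq_Ioc (by linarith) (by linarith)).symm
  have hdisj : Disjoint (B ∩ Set.Ioc (-γ) (2 * π - γ)) (B ∩ Set.Ioc (2 * π - γ) (4 * π - γ)) := by
    refine Disjoint.mono Set.inter_subset_right Set.inter_subset_right ?_
    rw [Set.Ioc_disjoint_Ioc]
    simp [min_le_iff, le_max_iff]
  have hvol2 : volume (B ∩ Set.Ioc (-γ) (4 * π - γ))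
      = volume (B ∩ Set.Ioc (-γ) (2 * π - γ)) + volume (B ∩ Set.Ioc (2 * π - γ) (4 * π - γ)) := by
    rw [hsplit, Set.inter_union_distrib_left]
    exact measure_union hdisj (hBmeas.inter measurableSet_Ioc)
  have hbase : volume (B ∩ Set.Ioc (-π) π) = ENNReal.ofReal (2 * (π - θ)) := by
    rw [cos_set_base hθ0 hθπ, Real.volume_Ioo]
    congr 1; ring
  have e1 : volume (B ∩ Set.Ioc (-γ) (2 * π - γ)) = ENNReal.ofReal (2 * (π - θ)) := by
    have e := periodic_vol hBmeas h2π hBper (-γ) (-π)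
    rw [show -γ + 2 * π = 2 * π - γ by ring, show -π + 2 * π = π by ring] at e
    rw [e, hbase]
  have e2 : volume (B ∩ Set.Ioc (2 * π - γ) (4 * π - γ)) = ENNReal.ofReal (2 * (π - θ)) := by
    have e := periodic_vol hBmeas h2π hBper (2 * π - γ) (-π)
    rw [show 2 * π - γ + 2 * π = 4 * π - γ by ring, show -π + 2 * π = π by ring] at e
    rw [e, hbase]
  have htotal : volume {φ ∈ Set.Ico (0 : ℝ) (2 * π) | 0 < ⟪v₁, h φ⟫_ℝ * ⟪v₂, h φ⟫_ℝ}
      = ENNReal.ofReal (2 * π - 2 * θ) := by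
    rw [hset, hpre, hIcoIoc, hvol2, e1, e2,
      ← ENNReal.ofReal_add (by linarith) (by linarith), ← ENNReal.ofReal_mul (by norm_num)]
    congr 1; ring
  rw [htotal, ENNReal.toReal_ofReal (by linarith)]
  field_simp
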